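/- Let I be a semi-graphoid on a finite set V, and let G be a DAG on V with topological order π such that I({v}, Pre(v) \ Pa(v), Pa(v)) holds for every v. Suppose H is a subgraph of G (Pa_H(v) ⊆ Pa_G(v) for all v) that also satisfies the ordered Markov property relative to π. Then for every v and every u ∈ Pa_G(v) \ Pa_H(v), the statement I({v}, {u}, Pa_G(v) \ {u}) holds. -/
import Mathlib


/-- Three pairwise disjoint finsets. -/
def PairwiseDisj {V : Type*} [DecidableEq V] (A B S : Finset V) : Prop :=
  Disjoint A B ∧ Disjoint A S ∧ Disjoint B S

/-- A semi-graphoid: a ternary relation on pairwise disjoint finsets satisfying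
symmetry, decomposition, weak union and contraction. -/
structure SemiGraphoid (V : Type*) [DecidableEq V] where
  I : Finset V → Finset V → Finset V → Prop
  symm : ∀ A B S, PairwiseDisj A B S → I A B S → I B A S
  decomposition : ∀ A B C S, PairwiseDisj A (B ∪ C) S → I A (B ∪ C) S → I A B S
  weakUnion : ∀ A B C S, PairwiseDisj A (B ∪ C) S → I A (B ∪ C) S → I A B (S ∪ C)
  contraction : ∀ A B C S, PairwiseDisj A B (S ∪ C) → PairwiseDisj A C S →
    I A B (S ∪ C) → I A C S → I A (B ∪ C) S

/-- The set of vertices strictly preceding `v` in the linear order given by `π`. -/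
def Pre {V : Type*} [Fintype V] (π : V → ℕ) (v : V) : Finset V :=
  Finset.univ.filter (fun u => π u < π v)

/-- If a DAG `G` with topological order `π` satisfies the ordered Markov
property, and a subgraph `H` of `G` also satisfies it, then for every `v` and every
`u ∈ Pa_G(v) \ Pa_H(v)` we have `I({v}, {u}, Pa_G(v) \ {u})`. -/
theorem stmt6 {V : Type*} [Fintype V] [DecidableEq V] (SG : SemiGraphoid V)
    (π : V → ℕ) (hinj : Function.Injective π)
    (PaG PaH : V → Finset V)
    (hGtopo : ∀ v, PaG v ⊆ Pre π v)
    (hsub : ∀ v, PaH v ⊆ PaG v)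
    (hMarkovG : ∀ v, SG.I {v} (Pre π v \ PaG v) (PaG v))
    (hMarkovH : ∀ v, SG.I {v} (Pre π v \ PaH v) (PaH v)) :
    ∀ v u, u ∈ PaG v \ PaH v → SG.I {v} {u} (PaG v \ {u}) := by
  intro v u hu
  rw [Finset.mem_sdiff] at hu
  obtain ⟨huG, huH⟩ := hu
  have hvPre : v ∉ Pre π v := by simp [Pre]
  have hGPre : PaG v ⊆ Pre π v := hGtopo v
  have hHPre : PaH v ⊆ Pre π v := (hsub v).trans hGPre
  have hvG : v ∉ PaG v := fun h => hvPre (hGPre h)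
  have hvH : v ∉ PaH v := fun h => hvPre (hHPre h)
  have hsplit : Pre π v \ PaH v = (PaG v \ PaH v) ∪ (Pre π v \ PaG v) := by
    ext x
    simp only [Finset.mem_sdiff, Finset.mem_union]
    constructor
    · rintro ⟨h1, h2⟩
      by_cases hx : x ∈ PaG v
      · exact Or.inl ⟨hx, h2⟩
      · exact Or.inr ⟨h1, hx⟩
    · rintro (⟨h1, h2⟩ | ⟨h1, h2⟩)
      · exact ⟨hGPre h1, h2⟩
      · exact ⟨h1, fun hx => h2 (hsub v hx)⟩
  have disj1 : PairwiseDisj {v} ((PaG v \ PaH v) ∪ (Pre π v \ PaG v)) (PaH v) := by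
    refine ⟨?_, ?_, ?_⟩
    · rw [Finset.disjoint_singleton_left, ← hsplit, Finset.mem_sdiff]
      exact fun h => hvPre h.1
    · rw [Finset.disjoint_singleton_left]; exact hvH
    · rw [← hsplit]
      exact Finset.sdiff_disjoint
  have step1 : SG.I {v} (PaG v \ PaH v) (PaH v) := by
    apply SG.decomposition {v} (PaG v \ PaH v) (Pre π v \ PaG v) (PaH v) disj1
    rw [← hsplit]; exact hMarkovH v
  have hsplit2 : PaG v \ PaH v = {u} ∪ ((PaG v \ PaH v) \ {u}) := by
    ext x
    simp only [Finset.mem_sdiff, Finset.mem_union, Finset.mem_singleton]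
    constructor
    · rintro ⟨h1, h2⟩
      by_cases hx : x = u
      · exact Or.inl hx
      · exact Or.inr ⟨⟨h1, h2⟩, hx⟩
    · rintro (h | ⟨⟨h1, h2⟩, _⟩)
      · subst h; exact ⟨huG, huH⟩
      · exact ⟨h1, h2⟩
  have disj2 : PairwiseDisj {v} ({u} ∪ ((PaG v \ PaH v) \ {u})) (PaH v) := by
    rw [← hsplit2]
    refine ⟨?_, ?_, ?_⟩
    · rw [Finset.disjoint_singleton_left, Finset.mem_sdiff]
      exact fun h => hvG h.1
    · rw [Finset.disjoint_singleton_left]; exact hvH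
    · exact Finset.sdiff_disjoint
  have step2 := SG.weakUnion {v} {u} ((PaG v \ PaH v) \ {u}) (PaH v) disj2
    (by rw [← hsplit2]; exact step1)
  have hfin : PaH v ∪ ((PaG v \ PaH v) \ {u}) = PaG v \ {u} := by
    ext x
    simp only [Finset.mem_sdiff, Finset.mem_union, Finset.mem_singleton]
    constructor
    · rintro (h | ⟨⟨h1, h2⟩, h3⟩)
      · exact ⟨hsub v h, fun hx => huH (hx ▸ h)⟩
      · exact ⟨h1, h3⟩
    · rintro ⟨h1, h2⟩
      by_cases hx : x ∈ PaH v
      · exact Or.inl hx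
      · exact Or.inr ⟨⟨h1, hx⟩, h2⟩
  rwa [hfin] at step2
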